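/- Two Hermitian matrices A, B ∈ H_n are parallel with respect to the k-numerical radius if and only if there exists a rank-k orthogonal projection P with |tr(AP)| = w_k(A) and |tr(BP)| = w_k(B). -/

import Mathlib

open Matrix

/-- `P` is an orthogonal projection of rank `k`. -/
def IsProjOfRank {m : Type*} [Fintype m] [DecidableEq m]
    (P : Matrix m m ℂ) (k : ℕ) : Prop :=
  P * P = P ∧ Pᴴ = P ∧ P.rank = k

/-- The `k`-numerical range `W_k(A) = { tr (A P) : P an orthogonal projection of rank k }`. -/
def WK {m : Type*} [Fintype m] [DecidableEq m] (k : ℕ) (A : Matrix m m ℂ) : Set ℂ :=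
  {z | ∃ P : Matrix m m ℂ, IsProjOfRank P k ∧ z = (A * P).trace}

/-- The `k`-numerical radius `w_k(A) = max { |tr (A P)| : P a rank-k orthogonal projection }`. -/
noncomputable def wk {m : Type*} [Fintype m] [DecidableEq m] (k : ℕ) (A : Matrix m m ℂ) : ℝ :=
  sSup {r : ℝ | ∃ P : Matrix m m ℂ, IsProjOfRank P k ∧ r = ‖(A * P).trace‖}

/-- `A` and `B` are parallel with respect to the `k`-numerical radius. -/
noncomputable def ParallelWk {m : Type*} [Fintype m] [DecidableEq m]
    (k : ℕ) (A B : Matrix m m ℂ) : Prop :=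
  ∃ μ : ℂ, ‖μ‖ = 1 ∧ wk k (A + μ • B) = wk k A + wk k B

/-- Sum of the `k` largest eigenvalues of a Hermitian matrix (`0` if not Hermitian). -/
noncomputable def sumKLargest {m : Type*} [Fintype m] [DecidableEq m]
    (k : ℕ) (A : Matrix m m ℂ) : ℝ :=
  if h : A.IsHermitian then
    sSup {r : ℝ | ∃ s : Finset m, s.card = k ∧ r = ∑ i ∈ s, h.eigenvalues i}
  else 0

/-- Sum of the `k` smallest eigenvalues of a Hermitian matrix (`0` if not Hermitian). -/
noncomputable def sumKSmallest {m : Type*} [Fintype m] [DecidableEq m]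
    (k : ℕ) (A : Matrix m m ℂ) : ℝ :=
  if h : A.IsHermitian then
    sInf {r : ℝ | ∃ s : Finset m, s.card = k ∧ r = ∑ i ∈ s, h.eigenvalues i}
  else 0


section AuxStmt14
variable {n k : ℕ}


lemma trace_eq_rank_of_idem {n : ℕ} (P : Matrix (Fin n) (Fin n) ℂ)
    (h : P * P = P) : P.trace = (P.rank : ℂ) := by
  have hf : Matrix.toLin' P ∘ₗ Matrix.toLin' P = Matrix.toLin' P := by
    rw [← Matrix.toLin'_mul, h]
  obtain ⟨p, hp⟩ := (LinearMap.isProj_iff_isIdempotentElem _).mpr hf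
  have hrange : LinearMap.range P.mulVecLin = p := by
    apply le_antisymm
    · rintro x ⟨y, rfl⟩; exact hp.map_mem y
    · intro x hx; exact ⟨x, hp.map_id x hx⟩
  have ht := hp.trace
  have ht2 : LinearMap.trace ℂ _ (Matrix.toLin' P) = P.trace := by
    rw [LinearMap.trace_eq_matrix_trace ℂ (Pi.basisFun ℂ (Fin n)),
      LinearMap.toMatrix_eq_toMatrix', LinearMap.toMatrix'_toLin']
  rw [ht2] at ht
  rw [ht, Matrix.rank, hrange]

lemma exists_projOfRank {n k : ℕ} (hkn : k ≤ n) :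
    ∃ P : Matrix (Fin n) (Fin n) ℂ, IsProjOfRank P k := by
  classical
  set d : Fin n → ℂ := fun i => if (i : ℕ) < k then 1 else 0 with hd
  refine ⟨diagonal d, ?_, ?_, ?_⟩
  · rw [diagonal_mul_diagonal]
    exact congrArg _ (funext fun i => by by_cases h : (i : ℕ) < k <;> simp [hd, h])
  · rw [diagonal_conjTranspose]
    exact congrArg _ (funext fun i => by
      by_cases h : (i : ℕ) < k <;> simp [hd, h, Pi.star_apply])
  · rw [Matrix.rank_diagonal]
    have he : {i : Fin n // d i ≠ 0} ≃ Fin k := by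
      refine ⟨fun x => ⟨(x.1 : ℕ), ?_⟩, fun j => ⟨⟨(j : ℕ), lt_of_lt_of_le j.2 hkn⟩, ?_⟩, ?_, ?_⟩
      · by_contra hx
        exact x.2 (by simp [hd, hx])
      · simp [hd, j.2]
      · intro x; ext; rfl
      · intro j; ext; rfl
    rw [Fintype.card_congr he, Fintype.card_fin]

-- entries of a projection are bounded by 1
lemma entry_bound {n : ℕ} {P : Matrix (Fin n) (Fin n) ℂ}
    (h1 : P * P = P) (h2 : Pᴴ = P) (i j : Fin n) : ‖P i j‖ ≤ 1 := by
  have key : ∀ a b : Fin n, P a b = ∑ l, (starRingEnd ℂ) (P l a) * P l b := by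
    intro a b
    conv_lhs => rw [← h1]
    rw [Matrix.mul_apply]
    congr 1
    funext l
    rw [← congrFun (congrFun h2 a) l]
    rfl
  have hdiag : ∀ a : Fin n, P a a = ((∑ l, ‖P l a‖ ^ 2 : ℝ) : ℂ) := by
    intro a
    rw [key a a]
    push_cast
    refine Finset.sum_congr rfl fun l _ => ?_
    rw [← Complex.normSq_eq_conj_mul_self, ← Complex.ofReal_pow, Complex.sq_norm]
  have hnn : ∀ a, (0:ℝ) ≤ ∑ l, ‖P l a‖ ^ 2 := fun a =>
    Finset.sum_nonneg fun l _ => sq_nonneg _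
  have hle1 : ∀ a, ∑ l, ‖P l a‖ ^ 2 ≤ 1 := by
    intro a
    set t := ∑ l, ‖P l a‖ ^ 2 with ht
    have h1' : ‖P a a‖ ^ 2 ≤ t := by
      rw [ht]
      exact Finset.single_le_sum (fun l _ => sq_nonneg (‖P l a‖)) (Finset.mem_univ a)
    have h2' : ‖P a a‖ = t := by
      rw [hdiag a, Complex.norm_real, Real.norm_eq_abs, abs_of_nonneg (hnn a)]
    rw [h2'] at h1'
    nlinarith [hnn a]
  have : ‖P i j‖ ^ 2 ≤ ∑ l, ‖P l j‖ ^ 2 :=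
    Finset.single_le_sum (fun l _ => sq_nonneg (‖P l j‖)) (Finset.mem_univ i)
  nlinarith [this, hle1 j, norm_nonneg (P i j)]

-- uniform bound on |tr(A P)|
lemma trace_bound {n : ℕ} (A : Matrix (Fin n) (Fin n) ℂ) {P : Matrix (Fin n) (Fin n) ℂ}
    (h1 : P * P = P) (h2 : Pᴴ = P) :
    ‖(A * P).trace‖ ≤ ∑ i, ∑ j, ‖A i j‖ := by
  have hP := fun i j => entry_bound h1 h2 i j
  calc ‖(A * P).trace‖ ≤ ∑ i, ‖(A * P) i i‖ := by
        rw [Matrix.trace]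
        exact norm_sum_le _ _
    _ ≤ ∑ i, ∑ j, ‖A i j‖ := by
        refine Finset.sum_le_sum fun i _ => ?_
        rw [Matrix.mul_apply]
        refine (norm_sum_le _ _).trans ?_
        refine Finset.sum_le_sum fun j _ => ?_
        rw [norm_mul]
        calc ‖A i j‖ * ‖P j i‖
            ≤ ‖A i j‖ * 1 :=
              mul_le_mul_of_nonneg_left (hP j i) (norm_nonneg _)
          _ = _ := mul_one _

lemma projOfRank_iff_trace {P : Matrix (Fin n) (Fin n) ℂ} :
    IsProjOfRank P k ↔ P * P = P ∧ Pᴴ = P ∧ P.trace = (k : ℂ) := by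
  constructor
  · rintro ⟨h1, h2, h3⟩
    exact ⟨h1, h2, by rw [trace_eq_rank_of_idem P h1, h3]⟩
  · rintro ⟨h1, h2, h3⟩
    refine ⟨h1, h2, ?_⟩
    have := trace_eq_rank_of_idem P h1
    rw [h3] at this
    exact_mod_cast this.symm

lemma isCompact_projSet :
    IsCompact {P : Matrix (Fin n) (Fin n) ℂ | IsProjOfRank P k} := by
  have hset : {P : Matrix (Fin n) (Fin n) ℂ | IsProjOfRank P k} =
      {P : Matrix (Fin n) (Fin n) ℂ | P * P = P} ∩ {P | Pᴴ = P} ∩ {P | P.trace = (k : ℂ)} := by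
    ext P
    simp only [Set.mem_inter_iff, Set.mem_setOf_eq, projOfRank_iff_trace]
    tauto
  have hclosed : IsClosed {P : Matrix (Fin n) (Fin n) ℂ | IsProjOfRank P k} := by
    rw [hset]
    refine IsClosed.inter (IsClosed.inter ?_ ?_) ?_
    · exact isClosed_eq (continuous_id.matrix_mul continuous_id) continuous_id
    · exact isClosed_eq (continuous_id.matrix_conjTranspose) continuous_id
    · exact isClosed_eq (continuous_id.matrix_trace) continuous_const
  have hsub : {P : Matrix (Fin n) (Fin n) ℂ | IsProjOfRank P k} ⊆
      Set.univ.pi fun _ : Fin n => Set.univ.pi fun _ : Fin n => Metric.closedBall (0 : ℂ) 1 := by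
    rintro P ⟨h1, h2, _⟩ 
    intro i _
    intro j _
    simp only [Metric.mem_closedBall, dist_zero_right]
    exact entry_bound h1 h2 i j
  exact IsCompact.of_isClosed_subset
    (isCompact_univ_pi fun _ => isCompact_univ_pi fun _ => isCompact_closedBall 0 1)
    hclosed hsub


lemma wk_bddAbove (A : Matrix (Fin n) (Fin n) ℂ) :
    BddAbove {r : ℝ | ∃ P : Matrix (Fin n) (Fin n) ℂ,
      IsProjOfRank P k ∧ r = ‖(A * P).trace‖} := by
  refine ⟨∑ i, ∑ j, ‖A i j‖, ?_⟩
  rintro r ⟨P, ⟨h1, h2, _⟩, rfl⟩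
  exact trace_bound A h1 h2

lemma wk_upper {A P : Matrix (Fin n) (Fin n) ℂ} (hP : IsProjOfRank P k) :
    ‖(A * P).trace‖ ≤ wk k A :=
  le_csSup (wk_bddAbove A) ⟨P, hP, rfl⟩

lemma wk_le (hkn : k ≤ n) {A : Matrix (Fin n) (Fin n) ℂ} {c : ℝ}
    (h : ∀ P : Matrix (Fin n) (Fin n) ℂ, IsProjOfRank P k →
      ‖(A * P).trace‖ ≤ c) : wk k A ≤ c := by
  obtain ⟨P0, hP0⟩ := exists_projOfRank (k := k) hkn
  exact csSup_le ⟨_, P0, hP0, rfl⟩ (by rintro r ⟨P, hP, rfl⟩; exact h P hP)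

lemma exists_wk_max (hkn : k ≤ n) (A : Matrix (Fin n) (Fin n) ℂ) :
    ∃ P : Matrix (Fin n) (Fin n) ℂ, IsProjOfRank P k ∧
      ‖(A * P).trace‖ = wk k A := by
  obtain ⟨P0, hP0⟩ := exists_projOfRank (k := k) hkn
  have hcont : Continuous fun P : Matrix (Fin n) (Fin n) ℂ =>
      ‖(A * P).trace‖ :=
    continuous_norm.comp ((continuous_const.matrix_mul continuous_id).matrix_trace)
  obtain ⟨P, hPmem, hmax⟩ := isCompact_projSet.exists_isMaxOn ⟨P0, hP0⟩ hcont.continuousOn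
  refine ⟨P, hPmem, le_antisymm (wk_upper hPmem) (wk_le hkn fun Q hQ => hmax hQ)⟩

lemma trace_real {A P : Matrix (Fin n) (Fin n) ℂ} (hA : A.IsHermitian) (hP : Pᴴ = P) :
    ∃ r : ℝ, (A * P).trace = (r : ℂ) := by
  refine ⟨((A * P).trace).re, ?_⟩
  have : (starRingEnd ℂ) ((A * P).trace) = (A * P).trace := by
    have h1 : ((A * P)ᴴ).trace = star (A * P).trace := Matrix.trace_conjTranspose _
    rw [conjTranspose_mul, hP, hA.eq, Matrix.trace_mul_comm] at h1
    exact h1.symm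
  exact (Complex.conj_eq_iff_re.mp this).symm

lemma trace_add_smul (A B P : Matrix (Fin n) (Fin n) ℂ) (ε : ℝ) :
    ((A + ε • B) * P).trace = (A * P).trace + (ε : ℂ) * (B * P).trace := by
  rw [add_mul, Matrix.trace_add, smul_mul_assoc, Matrix.trace_smul, Complex.real_smul]

end AuxStmt14

/-- Hermitian `A, B` are parallel (i.e. `w_k(A + εB) = w_k(A) + w_k(B)` for
some `ε ∈ {-1, 1}`) iff there is a rank-`k` orthogonal projection `P` with
`|tr(AP)| = w_k(A)` and `|tr(BP)| = w_k(B)`. -/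
theorem stmt_14 (n k : ℕ) (hk : 1 ≤ k) (hkn : k < n)
    (A B : Matrix (Fin n) (Fin n) ℂ) (hA : A.IsHermitian) (hB : B.IsHermitian) :
    (∃ ε : ℝ, (ε = 1 ∨ ε = -1) ∧ wk k (A + ε • B) = wk k A + wk k B) ↔
      ∃ P : Matrix (Fin n) (Fin n) ℂ, IsProjOfRank P k ∧
        ‖(A * P).trace‖ = wk k A ∧ ‖(B * P).trace‖ = wk k B := by
  have hkn' : k ≤ n := le_of_lt hkn
  constructor
  · rintro ⟨ε, hε, heq⟩
    obtain ⟨P, hP, hmax⟩ := exists_wk_max hkn' (A + ε • B)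
    have hε1 : |ε| = 1 := by rcases hε with rfl | rfl <;> simp
    have htri : ‖((A + ε • B) * P).trace‖ ≤
        ‖(A * P).trace‖ + ‖(B * P).trace‖ := by
      rw [trace_add_smul]
      refine (norm_add_le _ _).trans ?_
      rw [norm_mul, Complex.norm_real, Real.norm_eq_abs, hε1, one_mul]
    have hub1 := wk_upper (A := A) hP
    have hub2 := wk_upper (A := B) hP
    rw [hmax, heq] at htri
    exact ⟨P, hP, by linarith, by linarith⟩
  · rintro ⟨P, hP, ha, hb⟩
    obtain ⟨r, hr⟩ := trace_real hA hP.2.1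
    obtain ⟨s, hs⟩ := trace_real hB hP.2.1
    rw [hr, Complex.norm_real, Real.norm_eq_abs] at ha
    rw [hs, Complex.norm_real, Real.norm_eq_abs] at hb
    have habs : ∃ ε : ℝ, (ε = 1 ∨ ε = -1) ∧ |r + ε * s| = |r| + |s| := by
      rcases le_total 0 r with hr0 | hr0 <;> rcases le_total 0 s with hs0 | hs0
      · exact ⟨1, Or.inl rfl, by
          rw [one_mul, abs_of_nonneg (by linarith), abs_of_nonneg hr0, abs_of_nonneg hs0]⟩
      · exact ⟨-1, Or.inr rfl, by
          rw [neg_one_mul, abs_of_nonneg (by linarith), abs_of_nonneg hr0, abs_of_nonpos hs0]⟩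
      · exact ⟨-1, Or.inr rfl, by
          rw [neg_one_mul, abs_of_nonpos (by linarith), abs_of_nonpos hr0, abs_of_nonneg hs0]
          ring⟩
      · exact ⟨1, Or.inl rfl, by
          rw [one_mul, abs_of_nonpos (by linarith), abs_of_nonpos hr0, abs_of_nonpos hs0]
          ring⟩
    obtain ⟨ε, hεor, hεeq⟩ := habs
    have hε1 : |ε| = 1 := by rcases hεor with rfl | rfl <;> simp
    refine ⟨ε, hεor, le_antisymm ?_ ?_⟩
    · refine wk_le hkn' fun Q hQ => ?_
      rw [trace_add_smul]
      refine (norm_add_le _ _).trans ?_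
      rw [norm_mul, Complex.norm_real, Real.norm_eq_abs, hε1, one_mul]
      exact add_le_add (wk_upper hQ) (wk_upper hQ)
    · have hval : ‖((A + ε • B) * P).trace‖ = wk k A + wk k B := by
        rw [trace_add_smul, hr, hs, ← Complex.ofReal_mul, ← Complex.ofReal_add,
          Complex.norm_real, Real.norm_eq_abs, hεeq, ha, hb]
      calc wk k A + wk k B = ‖((A + ε • B) * P).trace‖ := hval.symm
        _ ≤ wk k (A + ε • B) := wk_upper hP
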